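/- arXiv:0811.3263 — 5 statements merged into one kernel-verified Lean document; each statement's English description precedes it below -/
import Mathlib

section
/- If A is an associative L-torus over a field F of characteristic not 2 (i.e., an L-graded associative unital F-algebra such that each homogeneous component A^σ is one-dimensional and spanned by an invertible element), then A decomposes as the direct sum of its center Z(A) and the span [A,A] of all commutators: A = Z(A) ⊕ [A,A]. -/
open MulOpposite

section Aux

variable {F : Type*} [Field F]
  {L : Type*} [AddCommGroup L] [DecidableEq L]
  {A : Type*} [Ring A] [Algebra F A]
  (𝒜 : L → Submodule F A) [DirectSum.Decomposition 𝒜]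

open DirectSum

lemma aux_isUnit {c : F} (hc : c ≠ 0) {u : A} (hu : IsUnit u) : IsUnit (c • u) := by
  rw [Algebra.smul_def]
  exact ((isUnit_iff_ne_zero.mpr hc).map (algebraMap F A)).mul hu

lemma aux_projR (hmul : ∀ σ τ : L, ∀ a ∈ 𝒜 σ, ∀ b ∈ 𝒜 τ, a * b ∈ 𝒜 (σ + τ))
    {u : A} {τ : L} (hu : u ∈ 𝒜 τ) (σ : L) (x : A) :
    (decompose 𝒜 (x * u) (σ + τ) : A) = (decompose 𝒜 x σ : A) * u := by
  refine DirectSum.Decomposition.inductionOn 𝒜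
    (motive := fun x => (decompose 𝒜 (x * u) (σ + τ) : A) = (decompose 𝒜 x σ : A) * u)
    (by simp) ?_ ?_ x
  · intro ρ m
    by_cases h : ρ = σ
    · subst h
      rw [decompose_of_mem_same 𝒜 (hmul ρ τ _ m.2 u hu), decompose_of_mem_same 𝒜 m.2]
    · rw [decompose_of_mem_ne 𝒜 (hmul ρ τ _ m.2 u hu)
        (fun hh => h (add_right_cancel hh)),
        decompose_of_mem_ne 𝒜 m.2 h, zero_mul]
  · intro a b ha hb
    rw [add_mul, decompose_add, decompose_add]
    push_cast [DirectSum.add_apply]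
    rw [ha, hb, add_mul]

lemma aux_projL (hmul : ∀ σ τ : L, ∀ a ∈ 𝒜 σ, ∀ b ∈ 𝒜 τ, a * b ∈ 𝒜 (σ + τ))
    {u : A} {τ : L} (hu : u ∈ 𝒜 τ) (σ : L) (x : A) :
    (decompose 𝒜 (u * x) (τ + σ) : A) = u * (decompose 𝒜 x σ : A) := by
  refine DirectSum.Decomposition.inductionOn 𝒜
    (motive := fun x => (decompose 𝒜 (u * x) (τ + σ) : A) = u * (decompose 𝒜 x σ : A))
    (by simp) ?_ ?_ x
  · intro ρ m
    by_cases h : ρ = σ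
    · subst h
      rw [decompose_of_mem_same 𝒜 (hmul τ ρ u hu _ m.2), decompose_of_mem_same 𝒜 m.2]
    · rw [decompose_of_mem_ne 𝒜 (hmul τ ρ u hu _ m.2)
        (fun hh => h (add_left_cancel hh)),
        decompose_of_mem_ne 𝒜 m.2 h, mul_zero]
  · intro a b ha hb
    rw [mul_add, decompose_add, decompose_add]
    push_cast [DirectSum.add_apply]
    rw [ha, hb, mul_add]

/-- The inverse of a homogeneous unit is homogeneous of opposite degree. -/
lemma aux_inv (hone : (1 : A) ∈ 𝒜 0)
    (hmul : ∀ σ τ : L, ∀ a ∈ 𝒜 σ, ∀ b ∈ 𝒜 τ, a * b ∈ 𝒜 (σ + τ))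
    {u : A} {τ : L} (hu : u ∈ 𝒜 τ) (hunit : IsUnit u) :
    (↑hunit.unit⁻¹ : A) ∈ 𝒜 (-τ) := by
  have h1 := aux_projL 𝒜 hmul hu (-τ) (↑hunit.unit⁻¹ : A)
  rw [hunit.mul_val_inv, add_neg_cancel, decompose_of_mem_same 𝒜 hone] at h1
  -- h1 : 1 = u * d  where d is the (-τ)-component of u⁻¹
  have hd : (↑hunit.unit⁻¹ : A) = (decompose 𝒜 (↑hunit.unit⁻¹ : A) (-τ) : A) :=
    hunit.mul_left_cancel (by rw [hunit.mul_val_inv, h1])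
  rw [hd]
  exact (decompose 𝒜 (↑hunit.unit⁻¹ : A) (-τ)).2

/-- If the component of the sum of two degrees is central, then homogeneous elements
of those degrees commute. -/
lemma aux_comm
    (hmul : ∀ σ τ : L, ∀ a ∈ 𝒜 σ, ∀ b ∈ 𝒜 τ, a * b ∈ 𝒜 (σ + τ))
    (htorus : ∀ σ : L, ∃ u : A, IsUnit u ∧ 𝒜 σ = Submodule.span F {u})
    {σ τ : L}
    (hc : 𝒜 (σ + τ) ≤ Subalgebra.toSubmodule (Subalgebra.center F A))
    {a b : A} (ha : a ∈ 𝒜 σ) (hb : b ∈ 𝒜 τ) : a * b = b * a := by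
  obtain ⟨u, hu, hspan⟩ := htorus σ
  rw [hspan, Submodule.mem_span_singleton] at ha
  obtain ⟨c, rfl⟩ := ha
  by_cases hc0 : c = 0
  · subst hc0; simp
  have haU : IsUnit (c • u) := aux_isUnit hc0 hu
  have huσ : u ∈ 𝒜 σ := by rw [hspan]; exact Submodule.mem_span_singleton_self u
  have hba : b * (c • u) ∈ 𝒜 (σ + τ) := by
    have h1 : b * (c • u) ∈ 𝒜 (τ + σ) := hmul τ σ b hb _ (Submodule.smul_mem _ _ huσ)
    rwa [add_comm τ σ] at h1
  have hcen : ∀ g : A, g * (b * (c • u)) = (b * (c • u)) * g :=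
    Subalgebra.mem_center_iff.mp ((Subalgebra.mem_toSubmodule _).mp (hc hba))
  have key : (c • u) * (b * (c • u)) = (b * (c • u)) * (c • u) := hcen (c • u)
  have h2 : ((c • u) * b) * (c • u) = (b * (c • u)) * (c • u) := by
    rw [mul_assoc]; exact key
  exact haU.mul_right_cancel h2

end Aux

/-- If `A` is an associative `L`-torus over a field `F` of characteristic ≠ 2, then
`A = Z(A) ⊕ [A,A]`. -/
theorem stmt0
    (F : Type*) [Field F] (hchar : (2 : F) ≠ 0)
    (L : Type*) [AddCommGroup L] [DecidableEq L]
    (A : Type*) [Ring A] [Algebra F A]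
    (𝒜 : L → Submodule F A) [DirectSum.Decomposition 𝒜]
    (hone : (1 : A) ∈ 𝒜 0)
    (hmul : ∀ σ τ : L, ∀ a ∈ 𝒜 σ, ∀ b ∈ 𝒜 τ, a * b ∈ 𝒜 (σ + τ))
    (htorus : ∀ σ : L, ∃ u : A, IsUnit u ∧ 𝒜 σ = Submodule.span F {u}) :
    IsCompl (Subalgebra.toSubmodule (Subalgebra.center F A))
      (Submodule.span F {x : A | ∃ a b : A, x = a * b - b * a}) := by
  classical
  open DirectSum in
  set Z := Subalgebra.toSubmodule (Subalgebra.center F A) with hZdef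
  set C := Submodule.span F {x : A | ∃ a b : A, x = a * b - b * a} with hCdef
  -- components of commutators at "central" degrees vanish
  have hCcomp : ∀ σ : L, 𝒜 σ ≤ Z → ∀ x ∈ C, (DirectSum.decompose 𝒜 x σ : A) = 0 := by
    intro σ hσ x hx
    let f : A →ₗ[F] A :=
      (𝒜 σ).subtype ∘ₗ (DirectSum.component F L (fun i => 𝒜 i) σ) ∘ₗ
        (DirectSum.decomposeLinearEquiv 𝒜).toLinearMap
    have hf : ∀ y : A, f y = (DirectSum.decompose 𝒜 y σ : A) := fun y => rfl
    have hker : C ≤ LinearMap.ker f := by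
      rw [hCdef, Submodule.span_le]
      rintro _ ⟨a, b, rfl⟩
      rw [SetLike.mem_coe, LinearMap.mem_ker, hf]
      refine DirectSum.Decomposition.inductionOn 𝒜
        (motive := fun a => ∀ b : A, (DirectSum.decompose 𝒜 (a * b - b * a) σ : A) = 0)
        (by simp) ?_ ?_ a b
      · intro ρ m
        refine DirectSum.Decomposition.inductionOn 𝒜
          (motive := fun b => (DirectSum.decompose 𝒜 ((m : A) * b - b * (m : A)) σ : A) = 0)
          (by simp) ?_ ?_
        · intro τ n
          by_cases h : σ = ρ + τ
          · have hcen : 𝒜 (ρ + τ) ≤ Z := h ▸ hσ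
            rw [aux_comm 𝒜 hmul htorus hcen m.2 n.2, sub_self]
            simp
          · rw [DirectSum.decompose_sub]
            push_cast [DirectSum.sub_apply]
            rw [DirectSum.decompose_of_mem_ne 𝒜 (hmul ρ τ _ m.2 _ n.2) (Ne.symm h),
              DirectSum.decompose_of_mem_ne 𝒜 (hmul τ ρ _ n.2 _ m.2)
                (by rw [add_comm τ ρ]; exact Ne.symm h), sub_zero]
        · intro b b' hb hb'
          have : (m : A) * (b + b') - (b + b') * (m : A)
              = ((m : A) * b - b * (m : A)) + ((m : A) * b' - b' * (m : A)) := by noncomm_ring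
          rw [this, DirectSum.decompose_add]
          push_cast [DirectSum.add_apply]
          rw [hb, hb', add_zero]
      · intro a a' ha ha' b
        have : (a + a') * b - b * (a + a')
            = (a * b - b * a) + (a' * b - b * a') := by noncomm_ring
        rw [this, DirectSum.decompose_add]
        push_cast [DirectSum.add_apply]
        rw [ha b, ha' b, add_zero]
    exact hker hx
  -- components of central elements are central
  have hZcomp : ∀ x ∈ Z, ∀ σ : L, (DirectSum.decompose 𝒜 x σ : A) ∈ Z := by
    intro x hx σ
    rw [hZdef, Subalgebra.mem_toSubmodule, Subalgebra.mem_center_iff]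
    have hh : ∀ τ : L, ∀ c ∈ 𝒜 τ,
        (DirectSum.decompose 𝒜 x σ : A) * c = c * (DirectSum.decompose 𝒜 x σ : A) := by
      intro τ c hc
      have h1 := aux_projR 𝒜 hmul hc σ x
      have h2 := aux_projL 𝒜 hmul hc σ x
      have hxc : x * c = c * x :=
        (Subalgebra.mem_center_iff.mp (by rwa [hZdef, Subalgebra.mem_toSubmodule] at hx) c).symm
      rw [hxc, add_comm σ τ, h2] at h1
      exact h1.symm
    intro b
    refine DirectSum.Decomposition.inductionOn 𝒜
      (motive := fun b => b * (DirectSum.decompose 𝒜 x σ : A)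
        = (DirectSum.decompose 𝒜 x σ : A) * b) (by simp) ?_ ?_ b
    · intro τ n
      exact (hh τ _ n.2).symm
    · intro a b ha hb
      rw [add_mul, mul_add, ha, hb]
  constructor
  · -- disjointness
    rw [Submodule.disjoint_def]
    intro x hxZ hxC
    have hcomp : ∀ σ : L, (DirectSum.decompose 𝒜 x σ : A) = 0 := by
      intro σ
      by_cases hσ : 𝒜 σ ≤ Z
      · exact hCcomp σ hσ x hxC
      · by_contra hne
        obtain ⟨u, hu, hspan⟩ := htorus σ
        have hd : (DirectSum.decompose 𝒜 x σ : A) ∈ Submodule.span F {u} := by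
          rw [← hspan]; exact (DirectSum.decompose 𝒜 x σ).2
        rw [Submodule.mem_span_singleton] at hd
        obtain ⟨c, hc⟩ := hd
        have hc0 : c ≠ 0 := by rintro rfl; rw [zero_smul] at hc; exact hne hc.symm
        apply hσ
        rw [hspan, Submodule.span_le, Set.singleton_subset_iff]
        have hueq : u = c⁻¹ • (DirectSum.decompose 𝒜 x σ : A) := by
          rw [← hc, smul_smul, inv_mul_cancel₀ hc0, one_smul]
        have hmem := Submodule.smul_mem Z c⁻¹ (hZcomp x hxZ σ)
        rw [← hueq] at hmem
        exact hmem
    calc x = ∑ σ ∈ (DirectSum.decompose 𝒜 x).support,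
          (DirectSum.decompose 𝒜 x σ : A) := (DirectSum.sum_support_decompose 𝒜 x).symm
      _ = 0 := Finset.sum_eq_zero fun σ _ => hcomp σ
  · -- codisjointness
    rw [codisjoint_iff, eq_top_iff]
    intro x _
    refine DirectSum.Decomposition.inductionOn 𝒜
      (motive := fun x => x ∈ Z ⊔ C) (zero_mem _) ?_ (fun a b ha hb => add_mem ha hb) x
    intro σ m
    by_cases hσ : 𝒜 σ ≤ Z
    · exact Submodule.mem_sup_left (hσ m.2)
    suffices hCle : 𝒜 σ ≤ C from Submodule.mem_sup_right (hCle m.2)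
    obtain ⟨y, hyA, hyZ⟩ := SetLike.not_le_iff_exists.mp hσ
    -- y does not commute with some homogeneous element
    have hyc : ∃ τ : L, ∃ w, w ∈ 𝒜 τ ∧ y * w ≠ w * y := by
      by_contra hcon
      push_neg at hcon
      apply hyZ
      rw [hZdef, Subalgebra.mem_toSubmodule, Subalgebra.mem_center_iff]
      intro b
      refine DirectSum.Decomposition.inductionOn 𝒜
        (motive := fun b => b * y = y * b) (by simp) ?_ ?_ b
      · intro τ n
        exact (hcon τ _ n.2).symm
      · intro a b ha hb
        rw [add_mul, mul_add, ha, hb]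
    obtain ⟨τ, w, hwA, hwy⟩ := hyc
    -- y and w are units
    obtain ⟨u, hu, hspan⟩ := htorus σ
    have hyA' := hyA
    rw [hspan, Submodule.mem_span_singleton] at hyA'
    obtain ⟨c, hcy⟩ := hyA'
    have hc0 : c ≠ 0 := by
      rintro rfl; rw [zero_smul] at hcy
      exact hyZ (hcy ▸ zero_mem Z)
    have hyu : IsUnit y := hcy ▸ aux_isUnit hc0 hu
    obtain ⟨v, hv, hspanτ⟩ := htorus τ
    have hwA' := hwA
    rw [hspanτ, Submodule.mem_span_singleton] at hwA'
    obtain ⟨d, hdw⟩ := hwA'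
    have hd0 : d ≠ 0 := by
      rintro rfl; rw [zero_smul] at hdw
      exact hwy (by rw [← hdw, mul_zero, zero_mul])
    have hwu : IsUnit w := hdw ▸ aux_isUnit hd0 hv
    -- the conjugate z = w * y * w⁻¹
    set wi : A := (↑hwu.unit⁻¹ : A) with hwidef
    have hwi : wi ∈ 𝒜 (-τ) := aux_inv 𝒜 hone hmul hwA hwu
    set z : A := w * y * wi with hzdef
    have hzA : z ∈ 𝒜 σ := by
      have h1 : w * y ∈ 𝒜 (τ + σ) := hmul _ _ _ hwA _ hyA
      have h2 : (w * y) * wi ∈ 𝒜 (τ + σ + -τ) := hmul _ _ _ h1 _ hwi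
      have he : τ + σ + -τ = σ := by abel
      rwa [he] at h2
    have hzyC : z - y ∈ C := by
      apply Submodule.subset_span
      refine ⟨w, y * wi, ?_⟩
      have h3 : (y * wi) * w = y := by
        rw [mul_assoc, hwidef, hwu.val_inv_mul, mul_one]
      rw [h3, ← mul_assoc]
    -- z is a multiple of y
    have hzy : z ∈ Submodule.span F {y} := by
      have : Submodule.span F {y} = 𝒜 σ := by
        rw [hspan, ← hcy]
        exact Submodule.span_singleton_smul_eq (isUnit_iff_ne_zero.mpr hc0) u
      rw [this]; exact hzA
    rw [Submodule.mem_span_singleton] at hzy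
    obtain ⟨γ, hγ⟩ := hzy
    have hzney : z ≠ y := by
      intro h
      apply hwy
      have : (w * y * wi) * w = y * w := by rw [← hzdef, h]
      rw [mul_assoc, hwidef, hwu.val_inv_mul, mul_one] at this
      exact this.symm
    have hγ1 : γ - 1 ≠ 0 := by
      intro h
      apply hzney
      rw [← hγ, sub_eq_zero.mp h, one_smul]
    have hyC : y ∈ C := by
      have h4 : (γ - 1) • y = z - y := by rw [sub_smul, one_smul, hγ]
      have h5 : y = (γ - 1)⁻¹ • (z - y) := by
        rw [← h4, smul_smul, inv_mul_cancel₀ hγ1, one_smul]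
      rw [h5]
      exact Submodule.smul_mem _ _ hzyC
    -- conclude 𝒜 σ ≤ C
    have hspan' : 𝒜 σ = Submodule.span F {y} := by
      rw [hspan, ← hcy]
      exact (Submodule.span_singleton_smul_eq (isUnit_iff_ne_zero.mpr hc0) u).symm
    rw [hspan', Submodule.span_le, Set.singleton_subset_iff]
    exact hyC
end

section
/- Let A be an associative L-torus and let α be a homogeneous element of A not belonging to the center Z(A). Then α lies in the span of commutators [A,A]. (Key step: there is a homogeneous β with βα = δαβ for some scalar δ ≠ 1, and then [αβ⁻¹, β] = (1−δ)α.) -/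
open MulOpposite

/-- In an associative `L`-torus, any homogeneous element not in the center lies
in the span of commutators. -/
theorem stmt1
    (F : Type*) [Field F]
    (L : Type*) [AddCommGroup L] [DecidableEq L]
    (A : Type*) [Ring A] [Algebra F A]
    (𝒜 : L → Submodule F A) [DirectSum.Decomposition 𝒜]
    (hone : (1 : A) ∈ 𝒜 0)
    (hmul : ∀ σ τ : L, ∀ a ∈ 𝒜 σ, ∀ b ∈ 𝒜 τ, a * b ∈ 𝒜 (σ + τ))
    (htorus : ∀ σ : L, ∃ u : A, IsUnit u ∧ 𝒜 σ = Submodule.span F {u})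
    (σ : L) (α : A) (hα : α ∈ 𝒜 σ) (hcen : α ∉ Subalgebra.center F A) :
    α ∈ Submodule.span F {x : A | ∃ a b : A, x = a * b - b * a} := by
  classical
  have hα0 : α ≠ 0 := by
    rintro rfl; exact hcen (Subalgebra.zero_mem _)
  haveI : Nontrivial A := ⟨α, 0, hα0⟩
  rw [Subalgebra.mem_center_iff] at hcen
  push_neg at hcen
  obtain ⟨b, hb⟩ := hcen
  have hexτ : ∃ τ : L, (DirectSum.decompose 𝒜 b τ : A) * α ≠ α * (DirectSum.decompose 𝒜 b τ : A) := by
    by_contra h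
    push_neg at h
    apply hb
    conv_lhs => rw [← DirectSum.sum_support_decompose 𝒜 b]
    conv_rhs => rw [← DirectSum.sum_support_decompose 𝒜 b]
    rw [Finset.sum_mul, Finset.mul_sum]
    exact Finset.sum_congr rfl fun τ _ => h τ
  obtain ⟨τ, hβne⟩ := hexτ
  set β : A := (DirectSum.decompose 𝒜 b τ : A) with hβdef
  have hβmem : β ∈ 𝒜 τ := (DirectSum.decompose 𝒜 b τ).2
  have hβ0 : β ≠ 0 := by
    intro h; rw [h] at hβne; simp at hβne
  have unit_of_mem : ∀ (ρ : L) (x : A), x ∈ 𝒜 ρ → x ≠ 0 → IsUnit x := by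
    intro ρ x hx hx0
    obtain ⟨u, hu, hspan⟩ := htorus ρ
    rw [hspan, Submodule.mem_span_singleton] at hx
    obtain ⟨c, rfl⟩ := hx
    have hc : c ≠ 0 := by rintro rfl; simp at hx0
    rw [Algebra.smul_def]
    exact (IsUnit.map (algebraMap F A) (isUnit_iff_ne_zero.mpr hc)).mul hu
  have hαu := unit_of_mem σ α hα hα0
  have hβu := unit_of_mem τ β hβmem hβ0
  obtain ⟨w, hw, hspanw⟩ := htorus (σ + τ)
  have hab : α * β ∈ Submodule.span F {w} := by
    rw [← hspanw]; exact hmul σ τ α hα β hβmem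
  have hba : β * α ∈ Submodule.span F {w} := by
    rw [← hspanw]
    have := hmul τ σ β hβmem α hα
    rwa [add_comm τ σ] at this
  rw [Submodule.mem_span_singleton] at hab hba
  obtain ⟨c₁, hc₁⟩ := hab
  obtain ⟨c₂, hc₂⟩ := hba
  have hc₁0 : c₁ ≠ 0 := by
    rintro rfl
    simp only [zero_smul] at hc₁
    exact (hαu.mul hβu).ne_zero hc₁.symm
  set δ : F := c₂ * c₁⁻¹ with hδ
  have hδeq : β * α = δ • (α * β) := by
    rw [← hc₁, ← hc₂, smul_smul, hδ, mul_assoc, inv_mul_cancel₀ hc₁0, mul_one]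
  have hδ1 : δ ≠ 1 := by
    intro h
    rw [h, one_smul] at hδeq
    exact hβne hδeq
  set β' : A := ↑hβu.unit⁻¹ with hβ'
  have hββ' : β * β' = 1 := hβu.mul_val_inv
  have hβ'β : β' * β = 1 := hβu.val_inv_mul
  have key : (α * β') * β - β * (α * β') = (1 - δ) • α := by
    have h1 : (α * β') * β = α := by rw [mul_assoc, hβ'β, mul_one]
    have h2 : β * (α * β') = δ • α := by
      rw [← mul_assoc, hδeq, smul_mul_assoc, mul_assoc, hββ', mul_one]
    rw [h1, h2, sub_smul, one_smul]
  have hx : (α * β') * β - β * (α * β') ∈ {x : A | ∃ a b : A, x = a * b - b * a} :=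
    ⟨α * β', β, rfl⟩
  have hfin := Submodule.smul_mem
    (Submodule.span F {x : A | ∃ a b : A, x = a * b - b * a}) (1 - δ)⁻¹
    (Submodule.subset_span hx)
  rwa [key, smul_smul, inv_mul_cancel₀ (sub_ne_zero.mpr (Ne.symm hδ1)), one_smul] at hfin
end

section
/- Let Γ be an abelian group without 2-torsion, L a subgroup of Γ containing 2Γ, and S a subset of Γ such that Γ is generated by L ∪ S. Suppose Γ′, L′, S′ satisfy the same hypotheses. Then any group isomorphism η : L → L′ with η(2S) = 2S′ extends uniquely to a group isomorphism of Γ onto Γ′ mapping S onto S′. -/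
private lemma stmt3_aux {Γ Γ' : Type*} [AddCommGroup Γ] [AddCommGroup Γ']
    (L : AddSubgroup Γ) (L' : AddSubgroup Γ')
    (hL : ∀ g : Γ, g + g ∈ L)
    (S : Set Γ) (S' : Set Γ')
    (hgen : AddSubgroup.closure ((L : Set Γ) ∪ S) = ⊤)
    (η : L ≃+ L')
    (hη : ∀ x : L, ((x : Γ) ∈ {g : Γ | ∃ s ∈ S, g = s + s}) →
        ((η x : Γ') ∈ {g : Γ' | ∃ s ∈ S', g = s + s})) :
    ∀ g : Γ, ∃ g' : Γ', g' + g' = ((η ⟨g + g, hL g⟩ : L') : Γ') := by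
  intro g
  have hg : g ∈ AddSubgroup.closure ((L : Set Γ) ∪ S) := by
    rw [hgen]; exact AddSubgroup.mem_top g
  induction hg using AddSubgroup.closure_induction with
  | mem x hx =>
    rcases hx with hx | hx
    · refine ⟨η ⟨x, hx⟩, ?_⟩
      have h1 : (⟨x + x, hL x⟩ : L) = ⟨x, hx⟩ + ⟨x, hx⟩ := rfl
      rw [h1, map_add]; rfl
    · obtain ⟨s', _, heq⟩ := hη ⟨x + x, hL x⟩ ⟨x, hx, rfl⟩
      exact ⟨s', heq.symm⟩
  | zero =>
    refine ⟨0, ?_⟩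
    have h1 : (⟨(0 : Γ) + 0, hL 0⟩ : L) = 0 := by ext; simp
    rw [h1, map_zero]; simp
  | add x y hx hy ihx ihy =>
    obtain ⟨x', hx'⟩ := ihx
    obtain ⟨y', hy'⟩ := ihy
    refine ⟨x' + y', ?_⟩
    have h1 : (⟨(x + y) + (x + y), hL (x + y)⟩ : L)
        = ⟨x + x, hL x⟩ + ⟨y + y, hL y⟩ := by ext; show (x+y)+(x+y) = (x+x)+(y+y); abel
    rw [h1, map_add]
    push_cast
    rw [← hx', ← hy']; abel
  | neg x hx ihx =>
    obtain ⟨x', hx'⟩ := ihx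
    refine ⟨-x', ?_⟩
    have h1 : (⟨(-x) + (-x), hL (-x)⟩ : L) = -⟨x + x, hL x⟩ := by
      ext; show (-x)+(-x) = -(x+x); abel
    rw [h1, map_neg]
    push_cast
    rw [← hx']; abel

/-- Let `Γ` be an abelian group without 2-torsion, `L ≤ Γ` with `2Γ ⊆ L`, and `S ⊆ Γ` with
`Γ = ⟨L ∪ S⟩`; similarly for `Γ', L', S'`. Then any isomorphism `η : L ≃ L'` with
`η(2S) = 2S'` extends uniquely to an isomorphism `Γ ≃ Γ'` mapping `S` onto `S'`. -/
theorem stmt3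
    (Γ Γ' : Type*) [AddCommGroup Γ] [AddCommGroup Γ']
    (h2 : ∀ g : Γ, g + g = 0 → g = 0) (h2' : ∀ g : Γ', g + g = 0 → g = 0)
    (L : AddSubgroup Γ) (L' : AddSubgroup Γ')
    (hL : ∀ g : Γ, g + g ∈ L) (hL' : ∀ g : Γ', g + g ∈ L')
    (S : Set Γ) (S' : Set Γ')
    (hgen : AddSubgroup.closure ((L : Set Γ) ∪ S) = ⊤)
    (hgen' : AddSubgroup.closure ((L' : Set Γ') ∪ S') = ⊤)
    (η : L ≃+ L')
    (hη : ∀ x : L, ((x : Γ) ∈ {g : Γ | ∃ s ∈ S, g = s + s}) ↔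
        ((η x : Γ') ∈ {g : Γ' | ∃ s ∈ S', g = s + s})) :
    ∃! ψ : Γ ≃+ Γ', (∀ x : L, ψ (x : Γ) = (η x : Γ')) ∧ ⇑ψ '' S = S' := by
  classical
  have inj2 : ∀ a b : Γ, a + a = b + b → a = b := by
    intro a b h
    have h0 : (a - b) + (a - b) = 0 := by
      have : (a + a) - (b + b) = 0 := by rw [h]; abel
      calc (a - b) + (a - b) = (a + a) - (b + b) := by abel
        _ = 0 := this
    exact sub_eq_zero.mp (h2 _ h0)
  have inj2' : ∀ a b : Γ', a + a = b + b → a = b := by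
    intro a b h
    have h0 : (a - b) + (a - b) = 0 := by
      have : (a + a) - (b + b) = 0 := by rw [h]; abel
      calc (a - b) + (a - b) = (a + a) - (b + b) := by abel
        _ = 0 := this
    exact sub_eq_zero.mp (h2' _ h0)
  have hη' : ∀ x : L', ((x : Γ') ∈ {g : Γ' | ∃ s ∈ S', g = s + s}) →
      ((η.symm x : Γ) ∈ {g : Γ | ∃ s ∈ S, g = s + s}) := by
    intro x hx
    have := hη (η.symm x)
    rw [AddEquiv.apply_symm_apply] at this
    exact this.mpr hx
  have key := stmt3_aux L L' hL S S' hgen η (fun x hx => (hη x).mp hx)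
  have key' := stmt3_aux L' L hL' S' S hgen' η.symm hη'
  set φ : Γ → Γ' := fun g => (key g).choose with hφdef
  set φ' : Γ' → Γ := fun g => (key' g).choose with hφ'def
  have hφ : ∀ g : Γ, φ g + φ g = ((η ⟨g + g, hL g⟩ : L') : Γ') := fun g => (key g).choose_spec
  have hφ' : ∀ g : Γ', φ' g + φ' g = ((η.symm ⟨g + g, hL' g⟩ : L) : Γ) :=
    fun g => (key' g).choose_spec
  have hli : ∀ g : Γ, φ' (φ g) = g := by
    intro g
    apply inj2
    rw [hφ' (φ g)]
    have h1 : (⟨φ g + φ g, hL' (φ g)⟩ : L') = η ⟨g + g, hL g⟩ := Subtype.ext (hφ g)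
    rw [h1, AddEquiv.symm_apply_apply]
  have hri : ∀ g : Γ', φ (φ' g) = g := by
    intro g
    apply inj2'
    rw [hφ (φ' g)]
    have h1 : (⟨φ' g + φ' g, hL (φ' g)⟩ : L) = η.symm ⟨g + g, hL' g⟩ := Subtype.ext (hφ' g)
    rw [h1, AddEquiv.apply_symm_apply]
  have hadd : ∀ a b : Γ, φ (a + b) = φ a + φ b := by
    intro a b
    apply inj2'
    rw [hφ (a + b)]
    have h1 : (⟨(a + b) + (a + b), hL (a + b)⟩ : L) = ⟨a + a, hL a⟩ + ⟨b + b, hL b⟩ := by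
      ext; show (a + b) + (a + b) = (a + a) + (b + b); abel
    rw [h1, map_add]
    push_cast
    rw [← hφ a, ← hφ b]; abel
  have hext : ∀ x : L, φ (x : Γ) = ((η x : L') : Γ') := by
    intro x
    apply inj2'
    rw [hφ (x : Γ)]
    have h1 : (⟨(x : Γ) + (x : Γ), hL (x : Γ)⟩ : L) = x + x := rfl
    rw [h1, map_add]; rfl
  set ψ : Γ ≃+ Γ' :=
    { toFun := φ, invFun := φ', left_inv := hli, right_inv := hri,
      map_add' := hadd } with hψdef
  have hψcoe : ∀ g : Γ, ψ g = φ g := fun g => rfl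
  have himg : ⇑ψ '' S = S' := by
    ext t
    constructor
    · rintro ⟨s, hs, rfl⟩
      obtain ⟨s', hs', heq⟩ := (hη ⟨s + s, hL s⟩).mp ⟨s, hs, rfl⟩
      have : φ s = s' := by
        apply inj2'
        rw [hφ s, heq]
      rw [hψcoe, this]; exact hs'
    · intro ht
      obtain ⟨s, hs, heq⟩ := hη' ⟨t + t, hL' t⟩ ⟨t, ht, rfl⟩
      refine ⟨s, hs, ?_⟩
      rw [hψcoe]
      apply inj2'
      rw [hφ s]
      have h1 : (⟨s + s, hL s⟩ : L) = η.symm ⟨t + t, hL' t⟩ := Subtype.ext heq.symm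
      rw [h1, AddEquiv.apply_symm_apply]
  refine ⟨ψ, ⟨hext, himg⟩, ?_⟩
  rintro ψ₂ ⟨hext₂, -⟩
  ext g
  show ψ₂ g = φ g
  apply inj2'
  have : ψ₂ g + ψ₂ g = ψ₂ (g + g) := (map_add ψ₂ g g).symm
  rw [this]
  have h1 : ψ₂ (g + g) = ψ₂ ((⟨g + g, hL g⟩ : L) : Γ) := rfl
  rw [h1, hext₂ ⟨g + g, hL g⟩, hφ g]
end

section
/- Let ξ : X × X → A be a nondegenerate hermitian form over (A,−), E = span{E(x,y)}, with involution * satisfying E(x,y)* = E(y,x). Then the set F = span{U(x,y) : x,y ∈ X}, where U(x,y) = E(x,y) − E(y,x), equals both {T ∈ E : T* = −T} and the intersection U(X,ξ) ∩ E, where u(X,ξ) = {T ∈ End_A(X) : ξ(Tx,y) + ξ(x,Ty) = 0}. -/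
open MulOpposite

private def EOp {A : Type*} [Ring A] {X : Type*} [AddCommGroup X] [Module Aᵐᵒᵖ X]
    (ξ : X → X → A)
    (haddr : ∀ x y y' : X, ξ x (y + y') = ξ x y + ξ x y')
    (hsmulr : ∀ (α : A) (x y : X), ξ x (op α • y) = ξ x y * α)
    (x y : X) : X →ₗ[Aᵐᵒᵖ] X where
  toFun z := op (ξ y z) • x
  map_add' z z' := by
    show op (ξ y (z + z')) • x = op (ξ y z) • x + op (ξ y z') • x
    rw [haddr, op_add, add_smul]
  map_smul' α z := by
    have h : ξ y (α • z) = ξ y z * unop α := by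
      conv_lhs => rw [← op_unop α]
      exact hsmulr _ _ _
    simp only [RingHom.id_apply, h, op_mul, op_unop, mul_smul]

/-- For a nondegenerate hermitian form `ξ` with `𝔈 = span{E(x,y)}` carrying the involution
`*` (with `E(x,y)* = E(y,x)`), the span `𝔉` of the operators `U(x,y) = E(x,y) − E(y,x)`
equals `{T ∈ 𝔈 : T* = −T}` and equals `u(X,ξ) ∩ 𝔈`. -/
theorem stmt11
    (F : Type*) [Field F] (hchar : (2 : F) ≠ 0)
    (A : Type*) [Ring A] [Algebra F A] [StarRing A]
    (X : Type*) [AddCommGroup X] [Module Aᵐᵒᵖ X]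
    [Module F X] [SMulCommClass Aᵐᵒᵖ F X] [IsScalarTower F Aᵐᵒᵖ X]
    (ξ : X → X → A)
    (haddl : ∀ x x' y : X, ξ (x + x') y = ξ x y + ξ x' y)
    (haddr : ∀ x y y' : X, ξ x (y + y') = ξ x y + ξ x y')
    (hsmull : ∀ (α : A) (x y : X), ξ (op α • x) y = star α * ξ x y)
    (hsmulr : ∀ (α : A) (x y : X), ξ x (op α • y) = ξ x y * α)
    (hsymm : ∀ x y : X, ξ y x = star (ξ x y))
    (hnd : ∀ x : X, (∀ y, ξ x y = 0) → x = 0)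
    (𝔈 : Submodule F (X →ₗ[Aᵐᵒᵖ] X))
    (h𝔈 : 𝔈 = Submodule.span F
        {S : X →ₗ[Aᵐᵒᵖ] X | ∃ x y : X, ∀ z, S z = op (ξ y z) • x})
    (st : ↥𝔈 →ₗ[F] ↥𝔈)
    (hst2 : ∀ T, st (st T) = T)
    (hst : ∀ (x y : X) (S T : ↥𝔈),
        (∀ z, (S : X →ₗ[Aᵐᵒᵖ] X) z = op (ξ y z) • x) →
        (∀ z, (T : X →ₗ[Aᵐᵒᵖ] X) z = op (ξ x z) • y) → st S = T)
    (𝔉 : Submodule F (X →ₗ[Aᵐᵒᵖ] X))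
    (h𝔉 : 𝔉 = Submodule.span F
        {S : X →ₗ[Aᵐᵒᵖ] X | ∃ x y : X, ∀ z, S z = op (ξ y z) • x - op (ξ x z) • y}) :
    ((𝔉 : Set (X →ₗ[Aᵐᵒᵖ] X)) = {T | ∃ h : T ∈ 𝔈, st ⟨T, h⟩ = -⟨T, h⟩}) ∧
    ((𝔉 : Set (X →ₗ[Aᵐᵒᵖ] X)) =
      {T : X →ₗ[Aᵐᵒᵖ] X | ∀ x y : X, ξ (T x) y + ξ x (T y) = 0} ∩ (𝔈 : Set (X →ₗ[Aᵐᵒᵖ] X))) := by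
  subst h𝔈 h𝔉
  -- basic additive facts
  have hlzero : ∀ y, ξ 0 y = 0 := by
    intro y
    have h := haddl 0 0 y
    rw [add_zero] at h
    exact left_eq_add.mp h
  have hrzero : ∀ x, ξ x 0 = 0 := by
    intro x
    have h := haddr x 0 0
    rw [add_zero] at h
    exact left_eq_add.mp h
  have hlneg : ∀ x y, ξ (-x) y = - ξ x y := by
    intro x y
    have h := haddl x (-x) y
    rw [add_neg_cancel, hlzero] at h
    exact eq_neg_of_add_eq_zero_left (by rw [add_comm]; exact h.symm)
  have hlsub : ∀ x x' y, ξ (x - x') y = ξ x y - ξ x' y := by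
    intro x x' y
    rw [sub_eq_add_neg, haddl, hlneg, sub_eq_add_neg]
  -- the rank-one operators
  let E : X → X → (X →ₗ[Aᵐᵒᵖ] X) := EOp ξ haddr hsmulr
  have hEapp : ∀ x y z, E x y z = op (ξ y z) • x := fun _ _ _ => rfl
  have hEmem : ∀ x y, E x y ∈ Submodule.span F
      {S : X →ₗ[Aᵐᵒᵖ] X | ∃ x y : X, ∀ z, S z = op (ξ y z) • x} :=
    fun x y => Submodule.subset_span ⟨x, y, fun z => rfl⟩
  have hstE : ∀ x y, st ⟨E x y, hEmem x y⟩ = ⟨E y x, hEmem y x⟩ :=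
    fun x y => hst x y _ _ (fun z => rfl) (fun z => rfl)
  have hEsmul : ∀ (c : F) (x y : X), c • E x y = E (c • x) y := by
    intro c x y
    ext z
    simp only [LinearMap.smul_apply, hEapp]
    exact (smul_comm (op (ξ y z)) c x).symm
  have hFs : ∀ (c : F) (v : X), c • v = op (algebraMap F A c) • v := by
    intro c v
    rw [← MulOpposite.algebraMap_apply, algebraMap_smul]
  have hξsmul1 : ∀ (c : F) (x y : X), ξ (c • x) y = star (algebraMap F A c) * ξ x y := by
    intro c x y; rw [hFs, hsmull]
  -- the key commutation identity
  have key0 : ∀ (c : F) (x y z w : X),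
      algebraMap F A c * (ξ z x * ξ y w) = star (algebraMap F A c) * (ξ z x * ξ y w) := by
    intro c x y z w
    have h4 : (⟨E y (c • x), hEmem y (c • x)⟩ : ↥(Submodule.span F
        {S : X →ₗ[Aᵐᵒᵖ] X | ∃ x y : X, ∀ z, S z = op (ξ y z) • x}))
        = c • ⟨E y x, hEmem y x⟩ := by
      rw [← hstE (c • x) y]
      have e1 : (⟨E (c • x) y, hEmem (c • x) y⟩ : ↥(Submodule.span F
          {S : X →ₗ[Aᵐᵒᵖ] X | ∃ x y : X, ∀ z, S z = op (ξ y z) • x}))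
          = c • ⟨E x y, hEmem x y⟩ := Subtype.ext (hEsmul c x y).symm
      rw [e1, map_smul, hstE]
    have hmapeq : E y (c • x) = c • E y x := congrArg Subtype.val h4
    have h5 : op (ξ (c • x) z) • y = c • (op (ξ x z) • y) := LinearMap.congr_fun hmapeq z
    have lhs_eq : ξ (op (ξ (c • x) z) • y) w = ξ z x * algebraMap F A c * ξ y w := by
      rw [hsmull, hξsmul1, star_mul, star_star, ← hsymm]
    have rhs_eq : ξ (c • (op (ξ x z) • y)) w
        = star (algebraMap F A c) * (ξ z x * ξ y w) := by
      rw [hFs, hsmull, hsmull, ← hsymm]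
    calc algebraMap F A c * (ξ z x * ξ y w)
        = algebraMap F A c * ξ z x * ξ y w := by rw [mul_assoc]
      _ = ξ z x * algebraMap F A c * ξ y w := by rw [Algebra.commutes]
      _ = ξ (op (ξ (c • x) z) • y) w := lhs_eq.symm
      _ = ξ (c • (op (ξ x z) • y)) w := by rw [h5]
      _ = star (algebraMap F A c) * (ξ z x * ξ y w) := rhs_eq
  -- commutation for all elements of 𝔈
  have keyL : ∀ T ∈ Submodule.span F
      {S : X →ₗ[Aᵐᵒᵖ] X | ∃ x y : X, ∀ z, S z = op (ξ y z) • x},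
      ∀ (c : F) (z w : X), algebraMap F A c * ξ z (T w)
        = star (algebraMap F A c) * ξ z (T w) := by
    intro T hT
    induction hT using Submodule.span_induction with
    | mem S hS =>
      obtain ⟨x, y, hxy⟩ := id hS
      intro c z w
      rw [hxy, hsmulr]
      exact key0 c x y z w
    | zero =>
      intro c z w
      rw [LinearMap.zero_apply, hrzero, mul_zero, mul_zero]
    | add S T hS hT ihS ihT =>
      intro c z w
      rw [LinearMap.add_apply, haddr, mul_add, mul_add, ihS c z w, ihT c z w]
    | smul c' S hS ih =>
      intro c z w
      rw [LinearMap.smul_apply, hFs, hsmulr, ← mul_assoc, ← mul_assoc, ih c z w]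
  -- the adjoint identity: ξ((T*)z, w) = ξ(z, T w)
  have keyK : ∀ (T : X →ₗ[Aᵐᵒᵖ] X) (hT : T ∈ Submodule.span F
      {S : X →ₗ[Aᵐᵒᵖ] X | ∃ x y : X, ∀ z, S z = op (ξ y z) • x}),
      ∀ z w, ξ ((st ⟨T, hT⟩ : X →ₗ[Aᵐᵒᵖ] X) z) w = ξ z (T w) := by
    intro T hT
    induction hT using Submodule.span_induction with
    | mem S hS =>
      obtain ⟨x, y, hxy⟩ := id hS
      have h1 : st ⟨S, Submodule.subset_span hS⟩ = ⟨E y x, hEmem y x⟩ :=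
        hst x y _ _ hxy (fun z => rfl)
      intro z w
      rw [h1]
      show ξ (op (ξ x z) • y) w = ξ z (S w)
      rw [hxy, hsmull, hsmulr, ← hsymm]
    | zero =>
      intro z w
      have h1 : st ⟨0, Submodule.zero_mem _⟩ = 0 := by
        rw [show (⟨0, Submodule.zero_mem _⟩ : ↥(Submodule.span F
          {S : X →ₗ[Aᵐᵒᵖ] X | ∃ x y : X, ∀ z, S z = op (ξ y z) • x})) = 0 from Subtype.ext rfl,
          map_zero]
      rw [h1]
      show ξ ((0 : X →ₗ[Aᵐᵒᵖ] X) z) w = ξ z ((0 : X →ₗ[Aᵐᵒᵖ] X) w)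
      rw [LinearMap.zero_apply, LinearMap.zero_apply, hlzero, hrzero]
    | add S T hS hT ihS ihT =>
      intro z w
      have h1 : (⟨S + T, Submodule.add_mem _ hS hT⟩ : ↥(Submodule.span F
          {S : X →ₗ[Aᵐᵒᵖ] X | ∃ x y : X, ∀ z, S z = op (ξ y z) • x}))
          = ⟨S, hS⟩ + ⟨T, hT⟩ := Subtype.ext rfl
      rw [h1, map_add]
      show ξ ((st ⟨S, hS⟩ : X →ₗ[Aᵐᵒᵖ] X) z
          + (st ⟨T, hT⟩ : X →ₗ[Aᵐᵒᵖ] X) z) w = ξ z (S w + T w)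
      rw [haddl, haddr, ihS z w, ihT z w]
    | smul c S hS ih =>
      intro z w
      have h1 : (⟨c • S, Submodule.smul_mem _ c hS⟩ : ↥(Submodule.span F
          {S : X →ₗ[Aᵐᵒᵖ] X | ∃ x y : X, ∀ z, S z = op (ξ y z) • x}))
          = c • ⟨S, hS⟩ := Subtype.ext rfl
      rw [h1, map_smul]
      show ξ (c • (st ⟨S, hS⟩ : X →ₗ[Aᵐᵒᵖ] X) z) w = ξ z (c • S w)
      rw [hFs, hsmull, hFs, hsmulr, ih z w, ← Algebra.commutes]
      exact (keyL S hS c z w).symm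
  -- first equality
  have eq1 : ((Submodule.span F
      {S : X →ₗ[Aᵐᵒᵖ] X | ∃ x y : X, ∀ z, S z = op (ξ y z) • x - op (ξ x z) • y} :
        Submodule F (X →ₗ[Aᵐᵒᵖ] X)) : Set (X →ₗ[Aᵐᵒᵖ] X))
      = {T | ∃ h : T ∈ Submodule.span F
          {S : X →ₗ[Aᵐᵒᵖ] X | ∃ x y : X, ∀ z, S z = op (ξ y z) • x},
          st ⟨T, h⟩ = -⟨T, h⟩} := by
    apply Set.eq_of_subset_of_subset
    · -- 𝔉 ⊆ {T ∈ 𝔈 : T* = -T}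
      intro T hT
      induction hT using Submodule.span_induction with
      | mem S hS =>
        obtain ⟨x, y, hxy⟩ := id hS
        have hSeq : S = E x y - E y x := by
          ext z
          rw [hxy z, LinearMap.sub_apply, hEapp, hEapp]
        have hmem : S ∈ Submodule.span F
            {S : X →ₗ[Aᵐᵒᵖ] X | ∃ x y : X, ∀ z, S z = op (ξ y z) • x} :=
          hSeq ▸ Submodule.sub_mem _ (hEmem x y) (hEmem y x)
        refine ⟨hmem, ?_⟩
        have e1 : (⟨S, hmem⟩ : ↥(Submodule.span F
            {S : X →ₗ[Aᵐᵒᵖ] X | ∃ x y : X, ∀ z, S z = op (ξ y z) • x}))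
            = ⟨E x y, hEmem x y⟩ - ⟨E y x, hEmem y x⟩ := Subtype.ext hSeq
        rw [e1, map_sub, hstE, hstE, neg_sub]
      | zero =>
        refine ⟨Submodule.zero_mem _, ?_⟩
        rw [show (⟨0, Submodule.zero_mem _⟩ : ↥(Submodule.span F
          {S : X →ₗ[Aᵐᵒᵖ] X | ∃ x y : X, ∀ z, S z = op (ξ y z) • x})) = 0 from Subtype.ext rfl,
          map_zero, neg_zero]
      | add S T hS hT ihS ihT =>
        obtain ⟨hS', eS⟩ := ihS
        obtain ⟨hT', eT⟩ := ihT
        refine ⟨Submodule.add_mem _ hS' hT', ?_⟩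
        rw [show (⟨S + T, Submodule.add_mem _ hS' hT'⟩ : ↥(Submodule.span F
          {S : X →ₗ[Aᵐᵒᵖ] X | ∃ x y : X, ∀ z, S z = op (ξ y z) • x}))
          = ⟨S, hS'⟩ + ⟨T, hT'⟩ from Subtype.ext rfl, map_add, eS, eT, neg_add]
      | smul c S hS ih =>
        obtain ⟨hS', eS⟩ := ih
        refine ⟨Submodule.smul_mem _ c hS', ?_⟩
        rw [show (⟨c • S, Submodule.smul_mem _ c hS'⟩ : ↥(Submodule.span F
          {S : X →ₗ[Aᵐᵒᵖ] X | ∃ x y : X, ∀ z, S z = op (ξ y z) • x}))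
          = c • ⟨S, hS'⟩ from Subtype.ext rfl, map_smul, eS, smul_neg]
    · -- {T ∈ 𝔈 : T* = -T} ⊆ 𝔉
      intro T hT
      obtain ⟨h, hneg⟩ := hT
      -- S - st S ∈ 𝔉 for all S ∈ 𝔈
      have keyM : ∀ (S : X →ₗ[Aᵐᵒᵖ] X) (hS : S ∈ Submodule.span F
          {S : X →ₗ[Aᵐᵒᵖ] X | ∃ x y : X, ∀ z, S z = op (ξ y z) • x}),
          S - (st ⟨S, hS⟩ : X →ₗ[Aᵐᵒᵖ] X) ∈ Submodule.span F
          {S : X →ₗ[Aᵐᵒᵖ] X | ∃ x y : X, ∀ z, S z = op (ξ y z) • x - op (ξ x z) • y} := by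
        intro S hS
        induction hS using Submodule.span_induction with
        | mem S hS =>
          obtain ⟨x, y, hxy⟩ := id hS
          have h1 : st ⟨S, Submodule.subset_span hS⟩ = ⟨E y x, hEmem y x⟩ :=
            hst x y _ _ hxy (fun z => rfl)
          rw [h1]
          exact Submodule.subset_span ⟨x, y, fun z => by
            rw [LinearMap.sub_apply, hxy z, hEapp]⟩
        | zero =>
          rw [show (⟨0, Submodule.zero_mem _⟩ : ↥(Submodule.span F
            {S : X →ₗ[Aᵐᵒᵖ] X | ∃ x y : X, ∀ z, S z = op (ξ y z) • x})) = 0 from Subtype.ext rfl,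
            map_zero]
          simp
        | add S T hS hT ihS ihT =>
          rw [show (⟨S + T, Submodule.add_mem _ hS hT⟩ : ↥(Submodule.span F
            {S : X →ₗ[Aᵐᵒᵖ] X | ∃ x y : X, ∀ z, S z = op (ξ y z) • x}))
            = ⟨S, hS⟩ + ⟨T, hT⟩ from Subtype.ext rfl, map_add]
          have : S + T - ((st ⟨S, hS⟩ + st ⟨T, hT⟩ : ↥(Submodule.span F {S : X →ₗ[Aᵐᵒᵖ] X | ∃ x y : X, ∀ z, S z = op (ξ y z) • x})) : X →ₗ[Aᵐᵒᵖ] X)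
              = (S - (st ⟨S, hS⟩ : X →ₗ[Aᵐᵒᵖ] X))
                + (T - (st ⟨T, hT⟩ : X →ₗ[Aᵐᵒᵖ] X)) := by
            push_cast
            abel
          rw [this]
          exact Submodule.add_mem _ ihS ihT
        | smul c S hS ih =>
          rw [show (⟨c • S, Submodule.smul_mem _ c hS⟩ : ↥(Submodule.span F
            {S : X →ₗ[Aᵐᵒᵖ] X | ∃ x y : X, ∀ z, S z = op (ξ y z) • x}))
            = c • ⟨S, hS⟩ from Subtype.ext rfl, map_smul]
          have : c • S - ((c • st ⟨S, hS⟩ : ↥(Submodule.span F {S : X →ₗ[Aᵐᵒᵖ] X | ∃ x y : X, ∀ z, S z = op (ξ y z) • x})) : X →ₗ[Aᵐᵒᵖ] X)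
              = c • (S - (st ⟨S, hS⟩ : X →ₗ[Aᵐᵒᵖ] X)) := by
            push_cast
            rw [smul_sub]
          rw [this]
          exact Submodule.smul_mem _ c ih
      have hval : (st ⟨T, h⟩ : X →ₗ[Aᵐᵒᵖ] X) = -T := congrArg Subtype.val hneg
      have hmem2 : T + T ∈ Submodule.span F
          {S : X →ₗ[Aᵐᵒᵖ] X | ∃ x y : X, ∀ z, S z = op (ξ y z) • x - op (ξ x z) • y} := by
        have h2 := keyM T h
        rw [hval, sub_neg_eq_add] at h2
        exact h2
      have hhalf : ((2 : F)⁻¹) • (T + T) = T := by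
        rw [← two_smul F T, smul_smul, inv_mul_cancel₀ hchar, one_smul]
      exact hhalf ▸ Submodule.smul_mem _ _ hmem2
  refine ⟨eq1, ?_⟩
  rw [eq1]
  apply Set.eq_of_subset_of_subset
  · intro T hT
    obtain ⟨h, hneg⟩ := hT
    have hval : (st ⟨T, h⟩ : X →ₗ[Aᵐᵒᵖ] X) = -T := congrArg Subtype.val hneg
    refine ⟨?_, h⟩
    intro x y
    have hk := keyK T h x y
    rw [hval, LinearMap.neg_apply, hlneg] at hk
    rw [← hk, add_neg_cancel]
  · intro T hT
    obtain ⟨hu, h⟩ := hT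
    refine ⟨h, ?_⟩
    apply Subtype.ext
    apply LinearMap.ext
    intro z
    show (st ⟨T, h⟩ : X →ₗ[Aᵐᵒᵖ] X) z = -(T z)
    have hzero : (st ⟨T, h⟩ : X →ₗ[Aᵐᵒᵖ] X) z - (-(T z)) = 0 := by
      apply hnd
      intro u
      rw [hlsub, hlneg, keyK T h z u, sub_neg_eq_add, add_comm]
      exact hu z u
    exact sub_eq_zero.mp hzero
end

section
/- Let (A,−) be an associative L-torus with involution, L a subgroup of Γ, and ξ : X × X → A a nondegenerate Γ-graded hermitian form of finite graded F-dimension. If ξ is finely graded (dim_F X^σ ≤ 1 for all σ) and 2·supp_Γ(X) ⊆ L, then ξ is anisotropic: ξ(x,x) ≠ 0 for every nonzero homogeneous x ∈ X. -/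
open MulOpposite

/-- A nondegenerate `Γ`-graded hermitian form of finite graded `F`-dimension over an
associative `L`-torus with involution that is finely graded and satisfies
`2·supp_Γ(X) ⊆ L` is anisotropic. -/
theorem stmt13
    (F : Type*) [Field F] (hchar : (2 : F) ≠ 0)
    (Γ : Type*) [AddCommGroup Γ] [DecidableEq Γ] (L : AddSubgroup Γ)
    (A : Type*) [Ring A] [Algebra F A] [StarRing A]
    (𝒜 : Γ → Submodule F A) [DirectSum.Decomposition 𝒜]
    (hone : (1 : A) ∈ 𝒜 0)
    (hmul : ∀ σ τ : Γ, ∀ a ∈ 𝒜 σ, ∀ b ∈ 𝒜 τ, a * b ∈ 𝒜 (σ + τ))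
    (hsuppA : ∀ σ : Γ, σ ∉ L → 𝒜 σ = ⊥)
    (htorus : ∀ σ : Γ, σ ∈ L → ∃ u : A, IsUnit u ∧ 𝒜 σ = Submodule.span F {u})
    (hstarg : ∀ σ : Γ, ∀ a ∈ 𝒜 σ, star a ∈ 𝒜 σ)
    (X : Type*) [AddCommGroup X] [Module Aᵐᵒᵖ X] [Module F X]
    [SMulCommClass Aᵐᵒᵖ F X] [IsScalarTower F Aᵐᵒᵖ X]
    (ℳ : Γ → Submodule F X) [DirectSum.Decomposition ℳ]
    (hmod : ∀ σ τ : Γ, ∀ x ∈ ℳ σ, ∀ a ∈ 𝒜 τ, op a • x ∈ ℳ (σ + τ))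
    (ξ : X → X → A)
    (haddl : ∀ x x' y : X, ξ (x + x') y = ξ x y + ξ x' y)
    (haddr : ∀ x y y' : X, ξ x (y + y') = ξ x y + ξ x y')
    (hsmull : ∀ (α : A) (x y : X), ξ (op α • x) y = star α * ξ x y)
    (hsmulr : ∀ (α : A) (x y : X), ξ x (op α • y) = ξ x y * α)
    (hsymm : ∀ x y : X, ξ y x = star (ξ x y))
    (hgr : ∀ σ τ : Γ, ∀ x ∈ ℳ σ, ∀ y ∈ ℳ τ, ξ x y ∈ 𝒜 (σ + τ))
    (hnd : ∀ x : X, (∀ y, ξ x y = 0) → x = 0)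
    (hfin : ∀ σ : Γ, FiniteDimensional F ↥(ℳ σ))
    (hfine : ∀ σ : Γ, Module.finrank F ↥(ℳ σ) ≤ 1)
    (hsupp2 : ∀ σ : Γ, ℳ σ ≠ ⊥ → σ + σ ∈ L) :
    ∀ σ : Γ, ∀ x ∈ ℳ σ, x ≠ 0 → ξ x x ≠ 0 := by
  classical
  intro σ x hx hx0 hxx
  -- nondegeneracy: find y with ξ x y ≠ 0
  obtain ⟨y, hy⟩ : ∃ y, ξ x y ≠ 0 := by
    by_contra h
    push_neg at h
    exact hx0 (hnd x h)
  have hzero : ξ x 0 = 0 := by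
    have := haddr x 0 0
    rw [zero_add] at this
    exact (left_eq_add.mp this)
  have hsum : ∀ (s : Finset Γ) (f : Γ → X),
      ξ x (∑ τ ∈ s, f τ) = ∑ τ ∈ s, ξ x (f τ) := by
    intro s f
    induction s using Finset.induction_on with
    | empty => simpa using hzero
    | insert _ _ h ih => rw [Finset.sum_insert h, Finset.sum_insert h, haddr, ih]
  -- find a homogeneous component of y pairing nontrivially with x
  obtain ⟨τ, _, hτ⟩ : ∃ τ ∈ (DirectSum.decompose ℳ y).support,
      ξ x ((DirectSum.decompose ℳ y τ : X)) ≠ 0 := by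
    by_contra h
    push_neg at h
    apply hy
    conv_lhs => rw [← DirectSum.sum_support_decompose ℳ y]
    rw [hsum]
    exact Finset.sum_eq_zero h
  set yt : X := (DirectSum.decompose ℳ y τ : X) with hytdef
  have hyt : yt ∈ ℳ τ := (DirectSum.decompose ℳ y τ).2
  have hL1 : σ + σ ∈ L := by
    apply hsupp2
    intro h
    rw [h] at hx
    exact hx0 (by simpa using hx)
  have hL2 : σ + τ ∈ L := by
    by_contra h
    have hb := hsuppA _ h
    have hmem := hgr σ τ x hx yt hyt
    rw [hb] at hmem
    exact hτ (by simpa using hmem)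
  have hL3 : σ - τ ∈ L := by
    have h := L.sub_mem hL1 hL2
    have e : σ + σ - (σ + τ) = σ - τ := by abel
    rwa [e] at h
  obtain ⟨b, hbu, hbspan⟩ := htorus _ hL3
  have hbmem : b ∈ 𝒜 (σ - τ) := hbspan ▸ Submodule.mem_span_singleton_self b
  have hz : op b • yt ∈ ℳ σ := by
    have h := hmod τ (σ - τ) yt hyt b hbmem
    have e : τ + (σ - τ) = σ := by abel
    rwa [e] at h
  -- ℳ σ is one-dimensional, spanned by x
  haveI := hfin σ
  have hx0' : (⟨x, hx⟩ : ℳ σ) ≠ 0 := by simpa using hx0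
  have hspan : Submodule.span F {(⟨x, hx⟩ : ℳ σ)} = ⊤ := by
    apply Submodule.eq_top_of_finrank_eq
    rw [finrank_span_singleton hx0']
    have hle := hfine σ
    haveI : Nontrivial (ℳ σ) := nontrivial_of_ne _ _ hx0'
    have hge : 0 < Module.finrank F (ℳ σ) := Module.finrank_pos
    omega
  have hmem : (⟨op b • yt, hz⟩ : ℳ σ) ∈ Submodule.span F {(⟨x, hx⟩ : ℳ σ)} := by
    rw [hspan]; exact Submodule.mem_top
  obtain ⟨c, hc⟩ := Submodule.mem_span_singleton.mp hmem
  have hcx : c • x = op b • yt := congrArg Subtype.val hc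
  have hcs : c • x = op (algebraMap F A c) • x := by
    rw [← MulOpposite.algebraMap_apply, algebraMap_smul]
  have hkey : ξ x yt * b = 0 := by
    rw [← hsmulr, ← hcx, hcs, hsmulr, hxx, zero_mul]
  obtain ⟨u, rfl⟩ := hbu
  have : ξ x yt = ξ x yt * ↑u * ↑u⁻¹ := by
    rw [mul_assoc, Units.mul_inv, mul_one]
  rw [this, hkey, zero_mul] at hτ
  exact hτ rfl
end
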